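/- Let κ ≥ 0 be an integer, let r' ≥ 3 be an odd integer, set r = 2^κ · r', assume r ≥ 40, let n and n₀ be positive integers with n − n₀ ≥ 11 and r < 2^{n₀}, and let m be a positive integer with 2^n/r − 1 < m < 2^n/r + 1. Then 2^κ · (2/(2^n·m)) · ∑_{j=1}^{(r'−1)/2} sin²(π·m·j/2^{n−κ}) / sin²(π·j/2^{n−κ}) + (2^κ − 1)·m/2^n > 0.70. -/

import Mathlib

open Real

set_option maxHeartbeats 8000000


lemma my_sin_lb (x : ℝ) (hx : 0 ≤ x) : x - x^3/6 ≤ Real.sin x := by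
  have hd : ∀ t : ℝ, HasDerivAt (fun t => Real.sin t - t + t^3/6)
      (Real.cos t - 1 + t^2/2) t := by
    intro t
    have h1 := ((Real.hasDerivAt_sin t).sub (hasDerivAt_id t)).add
      ((hasDerivAt_pow 3 t).div_const 6)
    exact h1.congr_deriv (by norm_num; ring)
  have mono : MonotoneOn (fun t => Real.sin t - t + t^3/6) (Set.Ici 0) := by
    apply monotoneOn_of_deriv_nonneg (convex_Ici 0)
    · exact (Continuous.continuousOn (by continuity))
    · intro t ht; exact (hd t).differentiableAt.differentiableWithinAt
    · intro t ht
      rw [(hd t).deriv]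
      nlinarith [Real.one_sub_sq_div_two_le_cos (x := t)]
  have h0 := mono (Set.self_mem_Ici) (Set.mem_Ici.2 hx) hx
  simp only [Real.sin_zero] at h0
  linarith [h0]

lemma my_sin_lip (a b : ℝ) : Real.sin b - |a - b| ≤ Real.sin a := by
  have h := Real.sin_sub_sin b a
  have h1 : |Real.sin ((b - a)/2)| ≤ |(b - a)/2| := Real.abs_sin_le_abs
  have h2 : |Real.cos ((b + a)/2)| ≤ 1 := Real.abs_cos_le_one _
  have h3 : |Real.sin b - Real.sin a| ≤ |a - b| := by
    rw [h, abs_mul, abs_mul]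
    have : |(2:ℝ)| * |Real.sin ((b - a)/2)| * |Real.cos ((b + a)/2)| ≤ 2 * |(b-a)/2| * 1 := by
      apply mul_le_mul _ h2 (abs_nonneg _) (by positivity)
      rw [abs_two]
      nlinarith [abs_nonneg (Real.sin ((b-a)/2))]
    calc |(2:ℝ)| * |Real.sin ((b - a)/2)| * |Real.cos ((b + a)/2)| ≤ 2 * |(b-a)/2| * 1 := this
      _ = |b - a| := by rw [abs_div]; simp [abs_two]; ring
      _ = |a - b| := abs_sub_comm b a
  have := abs_le.1 h3
  linarith [this.1]

lemma my_sumsq (k : ℕ) : ∑ j ∈ Finset.Icc 1 k, (j:ℝ)^2 = k*(k+1)*(2*k+1)/6 := by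
  induction k with
  | zero => simp
  | succ k ih =>
    rw [Finset.sum_Icc_succ_top (by omega), ih]
    push_cast; ring

lemma my_sum4 (k : ℕ) : ∑ j ∈ Finset.Icc 1 k, (j:ℝ)^4
    = k*(k+1)*(2*k+1)*(3*k^2+3*k-1)/30 := by
  induction k with
  | zero => simp
  | succ k ih =>
    rw [Finset.sum_Icc_succ_top (by omega), ih]
    push_cast; ring


lemma my_core (x : ℝ) (hx : 1 ≤ x) :
    (0.723 : ℝ) ≤ 2*x/(2*x+1) - (2*π^2/3)*(x*(x+1)*(2*x+1)/6)/(2*x+1)^3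
      + (π^4/18)*(x*(x+1)*(2*x+1)*(3*x^2+3*x-1)/30)/(2*x+1)^5
      + 1/(2*x+1) - 1/40 := by
  have hR : (0:ℝ) < 2*x+1 := by linarith
  set t : ℝ := x*(x+1)/(2*x+1)^2 with ht
  have ht1 : t ≤ 1/4 := by
    rw [ht, div_le_iff₀ (by positivity)]; nlinarith
  have ht2 : 2/9 ≤ t := by
    rw [ht, le_div_iff₀ (by positivity)]; nlinarith
  have hid : 2*x/(2*x+1) - (2*π^2/3)*(x*(x+1)*(2*x+1)/6)/(2*x+1)^3
      + (π^4/18)*(x*(x+1)*(2*x+1)*(3*x^2+3*x-1)/30)/(2*x+1)^5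
      + 1/(2*x+1) - 1/40
      = 39/40 - (π^2/9)*t + (π^4/540)*(7*t^2 - t) := by
    rw [ht]; field_simp; ring
  rw [hid]
  have hπl : 3.141592 < π := Real.pi_gt_d6
  have hπu : π < 3.141593 := Real.pi_lt_d6
  have h2l : (9.8696 : ℝ) < π^2 := by nlinarith
  have h2u : π^2 < (9.8697 : ℝ) := by nlinarith
  have h4l : (97.40 : ℝ) < π^4 := by nlinarith
  have hkey : (10:ℝ)/81 ≤ 7*t^2 - t := by
    nlinarith [mul_nonneg (sub_nonneg.2 ht2) (sub_nonneg.2 ht2)]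
  have e1 : (π^2/9)*t ≤ 9.8697/36 := by nlinarith
  have e2 : (97.40:ℝ)/540 * (10/81) ≤ (π^4/540)*(7*t^2-t) := by
    apply mul_le_mul (by linarith) hkey (by norm_num) (by positivity)
  nlinarith [e1, e2]


lemma my_pia : π^2 ≤ 10 := by nlinarith [Real.pi_lt_d2, Real.pi_pos]
lemma my_pib : (0:ℝ) < 1 - π/2^12 := by nlinarith [Real.pi_lt_d2, Real.pi_pos]
lemma my_pic : (1-π/2^12)^2 ≤ 1 := by nlinarith [Real.pi_lt_d2, Real.pi_pos]
lemma my_final (v : ℝ) (hv : 0 ≤ v) :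
    (0.70:ℝ) < (1-π/2^12)^2*(1-1/2^11)*(0.723 - (v - 1/40)) + (1 - 1/2^11)*(v - 1/40) := by
  have h1 : π < 3.1416 := by linarith [Real.pi_lt_d6]
  have h2 : (0:ℝ) < π := Real.pi_pos
  have h3 : (0.9984:ℝ) ≤ (1-π/2^12)^2 := by nlinarith
  have h4 : (1-π/2^12)^2 ≤ 1 := my_pic
  nlinarith [mul_nonneg (by linarith : (0:ℝ) ≤ 1 - (1-π/2^12)^2) hv]

theorem stmt_8 (κ r' n n₀ m : ℕ) (hr'3 : 3 ≤ r') (hodd : Odd r')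
    (r : ℕ) (hr : r = 2 ^ κ * r') (hr40 : 40 ≤ r)
    (hn₀ : 0 < n₀) (hn : 0 < n) (hnn₀ : 11 ≤ n - n₀)
    (hr2 : r < 2 ^ n₀) (hm : 0 < m)
    (hm1 : (2 : ℝ) ^ n / r - 1 < m) (hm2 : (m : ℝ) < 2 ^ n / r + 1) :
    (2 : ℝ) ^ κ * (2 / ((2 : ℝ) ^ n * m)) *
        ∑ j ∈ Finset.Icc 1 ((r' - 1) / 2),
          Real.sin (π * m * j / (2 : ℝ) ^ ((n : ℤ) - κ)) ^ 2 /
            Real.sin (π * j / (2 : ℝ) ^ ((n : ℤ) - κ)) ^ 2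
      + ((2 : ℝ) ^ κ - 1) * m / 2 ^ n
      > 0.70 := by
  obtain ⟨k, hk⟩ := hodd
  have hk1 : 1 ≤ k := by omega
  have hJ : (r' - 1) / 2 = k := by omega
  -- κ < n₀ since 2^κ ≤ 2^κ * r' = r < 2^n₀
  have hκn₀ : κ < n₀ := by
    by_contra h
    push_neg at h
    have h1 : 2 ^ n₀ ≤ 2 ^ κ := Nat.pow_le_pow_right (by norm_num) h
    have h2 : 2 ^ κ ≤ r := by
      rw [hr]
      calc 2^κ = 2^κ * 1 := (mul_one _).symm
        _ ≤ 2^κ * r' := Nat.mul_le_mul_left _ (by omega)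
    omega
  have hn₀n : n₀ + 11 ≤ n := by omega
  have hκn : κ ≤ n := by omega
  -- nat size facts
  have hnat2 : 2 ^ 11 * r ≤ 2 ^ n := by
    calc 2 ^ 11 * r ≤ 2 ^ 11 * 2 ^ n₀ := by
          exact Nat.mul_le_mul_left _ (le_of_lt hr2)
      _ = 2 ^ (n₀ + 11) := by ring
      _ ≤ 2 ^ n := Nat.pow_le_pow_right (by norm_num) hn₀n
  have hnatE : 2 ^ 11 * r' ≤ 2 ^ (n - κ) := by
    have h1 : 2 ^ κ * (2 ^ 11 * r') ≤ 2 ^ κ * 2 ^ (n - κ) := by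
      calc 2 ^ κ * (2 ^ 11 * r') = 2 ^ 11 * r := by rw [hr]; ring
        _ ≤ 2 ^ n := hnat2
        _ = 2 ^ κ * 2 ^ (n - κ) := by rw [← pow_add]; congr 1; omega
    exact Nat.le_of_mul_le_mul_left h1 (by positivity)
  -- real abbreviations
  set E : ℝ := (2:ℝ) ^ (n - κ) with hEdef
  set R : ℝ := (r' : ℝ) with hRdef
  set x : ℝ := (k : ℝ) with hxdef
  have hE0 : (0:ℝ) < E := by positivity
  have hR0 : (0:ℝ) < R := by rw [hRdef]; exact_mod_cast by omega
  have hx1 : (1:ℝ) ≤ x := by rw [hxdef]; exact_mod_cast hk1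
  have hRx : R = 2 * x + 1 := by rw [hRdef, hxdef]; exact_mod_cast hk
  have hm0 : (0:ℝ) < m := by exact_mod_cast hm
  have hr0 : (0:ℝ) < (r:ℝ) := by exact_mod_cast by omega
  have h2n0 : (0:ℝ) < (2:ℝ)^n := by positivity
  have hEκ : (2:ℝ) ^ κ * E = 2 ^ n := by
    rw [hEdef, ← pow_add]; congr 1; omega
  have hrR : (r:ℝ) = 2 ^ κ * R := by rw [hRdef]; exact_mod_cast hr
  have hER : (2:ℝ) ^ n / r = E / R := by
    rw [← hEκ, hrR]
    rw [mul_div_mul_left _ _ (by positivity)]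
  rw [hER] at hm1 hm2
  have hRE : 2 ^ 11 * R ≤ E := by
    rw [hRdef, hEdef]; exact_mod_cast hnatE
  -- m bounds
  have hmRE1 : E - R < (m:ℝ) * R := by
    have := (div_lt_iff₀ hR0).1 (by linarith [hm1] : E / R < (m:ℝ) + 1)
    linarith
  have hmRE2 : (m:ℝ) * R < E + R := by
    have := (lt_div_iff₀ hR0).1 (by linarith [hm2] : (m:ℝ) - 1 < E / R)
    linarith
  have hm2048 : (2048:ℝ) ≤ (m:ℝ) := by
    have h1 : (2048:ℝ) ≤ E / R := by
      rw [le_div_iff₀ hR0]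
      have : ((2:ℝ)^11) * R = 2048 * R := by norm_num
      linarith [hRE, this]
    have h2 : (2047:ℝ) < (m:ℝ) := by linarith
    have h3 : (2047:ℕ) < m := by exact_mod_cast h2
    exact_mod_cast h3
  have hEm : R * (1 - 1/2^11) * (m:ℝ) ≤ E := by
    have hp : 0 ≤ ((m:ℝ) - 2048) * R := mul_nonneg (by linarith) hR0.le
    nlinarith [hp, hmRE2]
  -- second summand lower bound
  have h2κ1 : (1:ℝ) ≤ (2:ℝ)^κ := one_le_pow₀ (by norm_num)
  have hδr : (r:ℝ) ≤ (1/2^11) * 2^n := by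
    have : (2:ℝ)^11 * r ≤ 2^n := by exact_mod_cast hnat2
    linarith
  have hP2 : (1 - 1/2^11) * (1/R - 1/40) ≤ ((2:ℝ)^κ - 1) * m / 2^n := by
    have h2κ0 : (0:ℝ) < (2:ℝ)^κ := by positivity
    have e1 : (2:ℝ)^n - r < (m:ℝ) * r := by
      rw [← hEκ, hrR]
      nlinarith [hmRE1, h2κ0]
    have e2 : (1 - 1/2^11) / (r:ℝ) ≤ (m:ℝ) / 2^n := by
      rw [div_le_div_iff₀ hr0 h2n0]
      linarith [e1, hδr]
    have e3 : ((2:ℝ)^κ - 1) / r = 1/R - 1/(r:ℝ) := by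
      rw [hrR]
      rw [div_sub_div _ _ hR0.ne' (by positivity : ((2:ℝ)^κ * R) ≠ 0)]
      rw [div_eq_div_iff (by positivity) (by positivity)]
      ring
    have e4 : (1 - 1/2^11) * ((2:ℝ)^κ - 1) / r ≤ ((2:ℝ)^κ - 1) * m / 2^n := by
      rw [div_le_div_iff₀ hr0 h2n0] at e2 ⊢
      have h5 := mul_le_mul_of_nonneg_left e2 (by linarith : (0:ℝ) ≤ (2:ℝ)^κ - 1)
      nlinarith [h5]
    have e5 : (1 - 1/2^11) * (1/R - 1/40) ≤ (1 - 1/2^11) * ((2:ℝ)^κ - 1) / r := by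
      rw [mul_div_assoc, e3]
      have : (1:ℝ)/R - 1/40 ≤ 1/R - 1/(r:ℝ) := by
        have : (1:ℝ)/(r:ℝ) ≤ 1/40 := by
          apply div_le_div_of_nonneg_left (by norm_num) (by norm_num)
          exact_mod_cast hr40
        linarith
      exact mul_le_mul_of_nonneg_left this (by norm_num)
    linarith
  -- rewrite the zpow and the sum index
  have hzp : (2:ℝ) ^ ((n:ℤ) - (κ:ℤ)) = E := by
    rw [hEdef, ← zpow_natCast]
    congr 1
    omega
  rw [hJ, hzp]
  have hπ := Real.pi_pos
  have hπ4 : π < 3.15 := by linarith [Real.pi_lt_d2]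
  have hπsq : π^2 ≤ 10 := my_pia
  have hc1 : (0:ℝ) ≤ 1 - π/2^12 := my_pib.le
  have hRE' : (2048:ℝ) * R ≤ E := by
    have : ((2:ℝ)^11) * R = 2048 * R := by norm_num
    linarith
  -- per-term lower bound
  have hterm : ∀ j ∈ Finset.Icc 1 k,
      (1-π/2^12)^2 * E^2 * (1/R^2 - π^2*(j:ℝ)^2/(3*R^4) + π^4*(j:ℝ)^4/(36*R^6))
      ≤ Real.sin (π * (m:ℝ) * (j:ℝ) / E)^2 / Real.sin (π * (j:ℝ) / E)^2 := by
    intro j hj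
    rw [Finset.mem_Icc] at hj
    have hj1 : (1:ℝ) ≤ (j:ℝ) := by exact_mod_cast hj.1
    have hjx : (j:ℝ) ≤ x := by rw [hxdef]; exact_mod_cast hj.2
    have hj0 : (0:ℝ) < (j:ℝ) := by linarith
    set b := π * (j:ℝ) / R with hbdef
    have hb0 : 0 < b := div_pos (mul_pos hπ hj0) hR0
    have hbhalf : b ≤ π/2 := by
      rw [hbdef, hRx, div_le_div_iff₀ (by linarith : (0:ℝ) < 2*x+1) (by norm_num : (0:ℝ) < 2)]
      have h1 : π * (j:ℝ) ≤ π * x := mul_le_mul_of_nonneg_left hjx hπ.le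
      linarith [h1]
    have hsb : 2*(j:ℝ)/R ≤ Real.sin b := by
      have h := Real.mul_le_sin hb0.le hbhalf
      have h2 : 2/π * b = 2*(j:ℝ)/R := by
        rw [hbdef]; field_simp
      rw [← h2]; exact h
    have hsb0 : 0 < Real.sin b := lt_of_lt_of_le (by positivity) hsb
    set a := π * (m:ℝ) * (j:ℝ) / E with hadef
    have hab : |a - b| ≤ π * (j:ℝ) / E := by
      have hdiff : a - b = (π * (j:ℝ) / (E*R)) * ((m:ℝ)*R - E) := by
        rw [hadef, hbdef]; field_simp
      rw [hdiff, abs_mul,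
        abs_of_pos (div_pos (mul_pos hπ hj0) (mul_pos hE0 hR0))]
      have h2 : |(m:ℝ)*R - E| ≤ R := abs_le.2 ⟨by linarith, by linarith⟩
      calc π*(j:ℝ)/(E*R) * |(m:ℝ)*R - E| ≤ π*(j:ℝ)/(E*R) * R :=
            mul_le_mul_of_nonneg_left h2
              (le_of_lt (div_pos (mul_pos hπ hj0) (mul_pos hE0 hR0)))
        _ = π*(j:ℝ)/E := by field_simp
    have habs : π*(j:ℝ)/E ≤ (π/2^12) * Real.sin b := by
      have h1 : π*(j:ℝ)/E ≤ π*(j:ℝ)/(2^11*R) := by gcongr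
      have h2 : π*(j:ℝ)/(2^11*R) = (π/2^12) * (2*(j:ℝ)/R) := by
        field_simp
      have h3 : (π/2^12) * (2*(j:ℝ)/R) ≤ (π/2^12) * Real.sin b :=
        mul_le_mul_of_nonneg_left hsb (by positivity)
      exact h1.trans (h2.le.trans h3)
    have hsa : (1 - π/2^12) * Real.sin b ≤ Real.sin a := by
      have hl := my_sin_lip a b
      have habs2 := hab.trans habs
      have habne : sin b - |a - b| ≤ sin a := hl
      linarith [habne, habs2]
    have hb2 : b^2 ≤ (π/2)^2 := pow_le_pow_left₀ hb0.le hbhalf 2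
    have hb6 : 0 ≤ b - b^3/6 := by
      have e1 : b * b^2 ≤ b * (π/2)^2 := mul_le_mul_of_nonneg_left hb2 hb0.le
      have e2 : b * (π/2)^2 ≤ b * (10/4) := by
        apply mul_le_mul_of_nonneg_left _ hb0.le
        linarith [hπsq]
      linarith [e1, e2, hb0]
    have hnum : ((1-π/2^12) * (b - b^3/6))^2 ≤ Real.sin a ^ 2 := by
      have h1 : (1-π/2^12)*(b - b^3/6) ≤ (1-π/2^12)*Real.sin b :=
        mul_le_mul_of_nonneg_left (my_sin_lb b hb0.le) hc1
      exact pow_le_pow_left₀ (mul_nonneg hc1 hb6) (h1.trans hsa) 2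
    have hjE : (j:ℝ) < E := by
      rw [hRx] at hRE' hR0
      linarith
    have hdenθ0 : 0 < π * (j:ℝ)/E := div_pos (mul_pos hπ hj0) hE0
    have hdenθπ : π * (j:ℝ)/E < π := by
      rw [div_lt_iff₀ hE0]
      exact mul_lt_mul_of_pos_left hjE hπ
    have hden0 : 0 < Real.sin (π*(j:ℝ)/E) :=
      Real.sin_pos_of_pos_of_lt_pi hdenθ0 hdenθπ
    have hden : Real.sin (π*(j:ℝ)/E)^2 ≤ (π*(j:ℝ)/E)^2 := Real.sin_sq_le_sq
    have hstep : ((1-π/2^12)*(b-b^3/6))^2/(π*(j:ℝ)/E)^2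
        ≤ Real.sin a^2 / Real.sin (π*(j:ℝ)/E)^2 :=
      div_le_div₀ (sq_nonneg _) hnum (pow_pos hden0 2) hden
    have hident : (1-π/2^12)^2 * E^2 * (1/R^2 - π^2*(j:ℝ)^2/(3*R^4) + π^4*(j:ℝ)^4/(36*R^6))
        = ((1-π/2^12)*(b-b^3/6))^2/(π*(j:ℝ)/E)^2 := by
      rw [hbdef]; field_simp; ring
    rw [hident]
    exact hstep
  have hsum := Finset.sum_le_sum hterm
  -- closed form of the lower-bound sum
  have s1 : ∑ _j ∈ Finset.Icc 1 k, (1:ℝ) = (k:ℝ) := by simp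
  have hclosed : ∑ j ∈ Finset.Icc 1 k,
      ((1-π/2^12)^2 * E^2 * (1/R^2 - π^2*(j:ℝ)^2/(3*R^4) + π^4*(j:ℝ)^4/(36*R^6)))
      = (1-π/2^12)^2 * E^2 *
        (x/R^2 - π^2*(x*(x+1)*(2*x+1)/6)/(3*R^4)
          + π^4*(x*(x+1)*(2*x+1)*(3*x^2+3*x-1)/30)/(36*R^6)) := by
    calc ∑ j ∈ Finset.Icc 1 k,
        ((1-π/2^12)^2 * E^2 * (1/R^2 - π^2*(j:ℝ)^2/(3*R^4) + π^4*(j:ℝ)^4/(36*R^6)))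
        = ∑ j ∈ Finset.Icc 1 k,
          ((1-π/2^12)^2 * E^2/R^2 * 1
            + (-((1-π/2^12)^2 * E^2*π^2/(3*R^4))) * (j:ℝ)^2
            + (1-π/2^12)^2 * E^2*π^4/(36*R^6) * (j:ℝ)^4) :=
          Finset.sum_congr rfl (fun j _ => by ring)
      _ = (1-π/2^12)^2 * E^2/R^2 * (∑ _j ∈ Finset.Icc 1 k, (1:ℝ))
            + (-((1-π/2^12)^2 * E^2*π^2/(3*R^4))) * (∑ j ∈ Finset.Icc 1 k, (j:ℝ)^2)
            + (1-π/2^12)^2 * E^2*π^4/(36*R^6) * (∑ j ∈ Finset.Icc 1 k, (j:ℝ)^4) := by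
          rw [Finset.sum_add_distrib, Finset.sum_add_distrib,
            ← Finset.mul_sum, ← Finset.mul_sum, ← Finset.mul_sum]
      _ = _ := by
          rw [s1, my_sumsq, my_sum4, ← hxdef]
          ring
  set G : ℝ := x/R^2 - π^2*(x*(x+1)*(2*x+1)/6)/(3*R^4)
      + π^4*(x*(x+1)*(2*x+1)*(3*x^2+3*x-1)/30)/(36*R^6) with hGdef
  have hsumnn : 0 ≤ ∑ j ∈ Finset.Icc 1 k,
      ((1-π/2^12)^2 * E^2 * (1/R^2 - π^2*(j:ℝ)^2/(3*R^4) + π^4*(j:ℝ)^4/(36*R^6))) := by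
    apply Finset.sum_nonneg
    intro j _
    have hq : (1-π/2^12)^2 * E^2 * (1/R^2 - π^2*(j:ℝ)^2/(3*R^4) + π^4*(j:ℝ)^4/(36*R^6))
        = ((1-π/2^12)*E*(1/R - π^2*(j:ℝ)^2/(6*R^3)))^2 := by ring
    rw [hq]
    positivity
  have hCpos : (0:ℝ) < (1-π/2^12)^2 * E^2 := by
    have h0 : (0:ℝ) < 1 - π/2^12 := my_pib
    positivity
  have hGnn : 0 ≤ G := by
    rw [hclosed] at hsumnn
    by_contra hn'
    push_neg at hn'
    have h6 := mul_pos hCpos (neg_pos.2 hn')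
    nlinarith [h6, hsumnn]
  -- prefactor
  have hpre : (2:ℝ)^κ * (2/((2:ℝ)^n * m)) = 2/(E * m) := by
    rw [← hEκ]
    field_simp
  -- link to the core bound
  have hcore := my_core x hx1
  have hlink : 2*R*G + 1/R - 1/40
      = 2*x/(2*x+1) - (2*π^2/3)*(x*(x+1)*(2*x+1)/6)/(2*x+1)^3
        + (π^4/18)*(x*(x+1)*(2*x+1)*(3*x^2+3*x-1)/30)/(2*x+1)^5
        + 1/(2*x+1) - 1/40 := by
    rw [hGdef, hRx]
    have hx0 : (0:ℝ) < 2*x+1 := by linarith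
    field_simp
    ring
  have hcoreRG : 0.723 - (1/R - 1/40) ≤ 2*R*G := by
    rw [← hlink] at hcore
    linarith
  have hu_lb : -(1/40) ≤ 1/R - 1/40 := by
    have : (0:ℝ) < 1/R := by positivity
    linarith
  -- assemble first term
  have hfirst : (1-π/2^12)^2*(1-1/2^11)*(0.723 - (1/R - 1/40))
      ≤ (2:ℝ)^κ * (2/((2:ℝ)^n * m)) *
        ∑ j ∈ Finset.Icc 1 k,
          Real.sin (π * (m:ℝ) * (j:ℝ) / E)^2 / Real.sin (π * (j:ℝ) / E)^2 := by
    have c3 : R*(1-1/2^11) ≤ E/m := by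
      rw [le_div_iff₀ hm0]; exact hEm
    rw [hpre]
    calc (1-π/2^12)^2*(1-1/2^11)*(0.723 - (1/R - 1/40))
        ≤ (1-π/2^12)^2*(1-1/2^11)*(2*R*G) := by
          apply mul_le_mul_of_nonneg_left hcoreRG
          apply mul_nonneg (sq_nonneg _) (by norm_num)
      _ = 2*((1-π/2^12)^2)*G*(R*(1-1/2^11)) := by ring
      _ ≤ 2*((1-π/2^12)^2)*G*(E/m) := by
          apply mul_le_mul_of_nonneg_left c3
          have := sq_nonneg (1-π/2^12)
          positivity
      _ = 2/(E*m) * ((1-π/2^12)^2 * E^2 * G) := by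
          field_simp
      _ = 2/(E*m) * (∑ j ∈ Finset.Icc 1 k,
          ((1-π/2^12)^2 * E^2 * (1/R^2 - π^2*(j:ℝ)^2/(3*R^4) + π^4*(j:ℝ)^4/(36*R^6)))) := by
          rw [hclosed]
      _ ≤ 2/(E*m) * ∑ j ∈ Finset.Icc 1 k,
          Real.sin (π * (m:ℝ) * (j:ℝ) / E)^2 / Real.sin (π * (j:ℝ) / E)^2 := by
          apply mul_le_mul_of_nonneg_left hsum
          positivity
  have hfinal : (0.70:ℝ) < (1-π/2^12)^2*(1-1/2^11)*(0.723 - (1/R - 1/40))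
      + (1 - 1/2^11) * (1/R - 1/40) :=
    my_final (1/R) (by positivity)
  calc (0.70:ℝ) < (1-π/2^12)^2*(1-1/2^11)*(0.723 - (1/R - 1/40))
      + (1 - 1/2^11) * (1/R - 1/40) := hfinal
    _ ≤ _ := add_le_add hfirst hP2
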